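/- Let t ≥ 1 and 1 ≤ k ≤ t+1 be integers. Let b' be uniformly distributed over the set of binary vectors in {0,1}^{t+1} with exactly k ones. Construct b ∈ {0,1}^t as follows: set b := (b'_1, …, b'_t); if b'_{t+1} = 0, then, conditionally on b', draw an index J uniformly at random from {j ∈ {1, …, t} : b'_j = 1} and set the J-th coordinate of b to 0. Then b is uniformly distributed over the set of binary vectors in {0,1}^t with exactly k−1 ones. -/

import Mathlib

open MeasureTheory
open scoped ENNReal

lemma arith15 (t k : ℕ) (hk1 : 1 ≤ k) (hk2 : k ≤ t + 1) :
    (((t+1).choose k : ℝ≥0∞))⁻¹ + ((t + 1 - k : ℕ) : ℝ≥0∞) * ((((t+1).choose k : ℝ≥0∞))⁻¹ / (k : ℝ≥0∞))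
      = ((t.choose (k-1) : ℝ≥0∞))⁻¹ := by
  have hNn : (t+1).choose k ≠ 0 := (Nat.choose_pos hk2).ne'
  have hMn : t.choose (k-1) ≠ 0 := (Nat.choose_pos (by omega)).ne'
  have hid : k * (t+1).choose k = (t+1) * t.choose (k-1) := by
    have h := Nat.add_one_mul_choose_eq t (k-1)
    have hkk : k - 1 + 1 = k := by omega
    rw [hkk] at h
    rw [h]; ring
  set N : ℝ≥0∞ := ((t+1).choose k : ℝ≥0∞) with hN
  set K : ℝ≥0∞ := (k : ℝ≥0∞) with hK
  have hK0 : K ≠ 0 := by simp [hK]; omega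
  have hKt : K ≠ ⊤ := by simp [hK]
  have hinv : (K * N)⁻¹ = K⁻¹ * N⁻¹ := ENNReal.mul_inv (Or.inl hK0) (Or.inl hKt)
  have h1 : N⁻¹ / K = (K * N)⁻¹ := by
    rw [hinv, div_eq_mul_inv, mul_comm]
  have h2 : N⁻¹ = K * (K * N)⁻¹ := by
    rw [hinv, ← mul_assoc, ENNReal.mul_inv_cancel hK0 hKt, one_mul]
  rw [h1, h2, ← add_mul]
  have h3 : K + ((t + 1 - k : ℕ) : ℝ≥0∞) = ((t+1 : ℕ) : ℝ≥0∞) := by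
    rw [hK, ← Nat.cast_add]
    congr 1
    omega
  rw [h3]
  have h4 : K * N = ((t+1 : ℕ) : ℝ≥0∞) * ((t.choose (k-1) : ℕ) : ℝ≥0∞) := by
    rw [hK, hN, ← Nat.cast_mul, ← Nat.cast_mul, hid]
  rw [h4, ENNReal.mul_inv (Or.inl (by simp)) (Or.inl (by simp)), ← mul_assoc,
    ENNReal.mul_inv_cancel (by simp) (by simp), one_mul]

/-- Coupled Monte Carlo sampling scheme: if `b'` is uniform over binary vectors of length
`t+1` with exactly `k` ones, and `b ∈ {0,1}^t` is obtained from the first `t` coordinates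
of `b'` by, when the last coordinate of `b'` is `0`, flipping to `0` a uniformly chosen
coordinate `J` among the ones of `b'` (conditionally on `b'`), then `b` is uniform over
binary vectors of length `t` with exactly `k-1` ones. -/
theorem stmt_15 {Ω : Type*} [MeasureSpace Ω] [IsProbabilityMeasure (volume : Measure Ω)]
    (t k : ℕ) (ht : 1 ≤ t) (hk1 : 1 ≤ k) (hk2 : k ≤ t + 1)
    (b' : Ω → Fin (t + 1) → ℕ) (hb'meas : Measurable b')
    (hb'01 : ∀ ω i, b' ω i ≤ 1) (hb'sum : ∀ ω, ∑ i, b' ω i = k)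
    (hb'unif : ∀ v : Fin (t + 1) → ℕ, (∀ i, v i ≤ 1) → (∑ i, v i = k) →
      volume {ω | b' ω = v} = (((t + 1).choose k : ℝ≥0∞))⁻¹)
    (J : Ω → Fin t) (hJmeas : Measurable J)
    (hJunif : ∀ v : Fin (t + 1) → ℕ, (∀ i, v i ≤ 1) → (∑ i, v i = k) →
      v (Fin.last t) = 0 → ∀ j : Fin t, v j.castSucc = 1 →
        volume {ω | b' ω = v ∧ J ω = j} = (((t + 1).choose k : ℝ≥0∞))⁻¹ / (k : ℝ≥0∞))
    (b : Ω → Fin t → ℕ)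
    (hb : ∀ ω i, b ω i =
      if b' ω (Fin.last t) = 0 ∧ i = J ω then 0 else b' ω i.castSucc) :
    ∀ w : Fin t → ℕ, (∀ i, w i ≤ 1) → (∑ i, w i = k - 1) →
      volume {ω | b ω = w} = ((t.choose (k - 1) : ℝ≥0∞))⁻¹ := by
  intro w hw1 hwsum
  set vA : Fin (t + 1) → ℕ := Fin.snoc w 1 with hvA
  set vB : Fin t → Fin (t + 1) → ℕ := fun j => Fin.snoc (Function.update w j 1) 0 with hvB
  set s : Finset (Fin t) := Finset.univ.filter (fun j => w j = 0) with hs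
  have hvBlast : ∀ j, vB j (Fin.last t) = 0 := by
    intro j; simp only [hvB]; exact Fin.snoc_last _ _
  have hvBcast : ∀ j i, vB j i.castSucc = Function.update w j 1 i := by
    intro j i; simp only [hvB]; exact Fin.snoc_castSucc _ _ _
  have hvAlast : vA (Fin.last t) = 1 := by
    simp only [hvA]; exact Fin.snoc_last _ _
  have hvAcast : ∀ i, vA i.castSucc = w i := by
    intro i; simp only [hvA]; exact Fin.snoc_castSucc _ _ _
  -- the set decomposition
  have hset : {ω | b ω = w} =
      (b' ⁻¹' {vA}) ∪ ⋃ j ∈ s, (b' ⁻¹' {vB j} ∩ J ⁻¹' {j}) := by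
    ext ω
    simp only [Set.mem_setOf_eq, Set.mem_union, Set.mem_preimage, Set.mem_singleton_iff,
      Set.mem_iUnion, Set.mem_inter_iff, hs, Finset.mem_filter, Finset.mem_univ, true_and]
    constructor
    · intro hbw
      by_cases h1 : b' ω (Fin.last t) = 0
      · right
        have hwj : w (J ω) = 0 := by
          rw [← hbw, hb, if_pos ⟨h1, rfl⟩]
        have hcast : ∀ i : Fin t, i ≠ J ω → b' ω i.castSucc = w i := by
          intro i hi
          rw [← hbw, hb, if_neg (by tauto)]
        have hsum' : ∑ i : Fin t, b' ω i.castSucc = k := by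
          have := hb'sum ω
          rw [Fin.sum_univ_castSucc, h1, add_zero] at this
          exact this
        have e1 : b' ω (J ω).castSucc + ∑ i ∈ Finset.univ.erase (J ω), b' ω i.castSucc
            = ∑ i : Fin t, b' ω i.castSucc :=
          Finset.add_sum_erase _ (fun i : Fin t => b' ω i.castSucc) (Finset.mem_univ _)
        have e2 : w (J ω) + ∑ i ∈ Finset.univ.erase (J ω), w i = ∑ i : Fin t, w i :=
          Finset.add_sum_erase _ w (Finset.mem_univ _)
        have heq : ∑ i ∈ Finset.univ.erase (J ω), b' ω i.castSucc
            = ∑ i ∈ Finset.univ.erase (J ω), w i :=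
          Finset.sum_congr rfl fun i hi => hcast i (Finset.ne_of_mem_erase hi)
        have hbj : b' ω (J ω).castSucc = 1 := by omega
        refine ⟨J ω, hwj, ?_, rfl⟩
        funext i
        induction i using Fin.lastCases with
        | last => rw [h1, hvBlast]
        | cast i =>
          rw [hvBcast]
          by_cases hij : i = J ω
          · subst hij; rw [Function.update_self]; exact hbj
          · rw [Function.update_of_ne hij]; exact hcast i hij
      · left
        have h1' : b' ω (Fin.last t) = 1 := by
          have := hb'01 ω (Fin.last t); omega
        funext i
        induction i using Fin.lastCases with
        | last => rw [h1', hvAlast]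
        | cast i =>
          rw [hvAcast]
          rw [← hbw, hb, if_neg (by tauto)]
    · rintro (h | ⟨j, hj0, hbv, hJ⟩)
      · funext i
        have hlast : b' ω (Fin.last t) = 1 := by rw [h, hvAlast]
        rw [hb, if_neg (by rw [hlast]; simp), h, hvAcast]
      · funext i
        have hlast : b' ω (Fin.last t) = 0 := by rw [hbv, hvBlast]
        by_cases hij : i = J ω
        · rw [hb, if_pos ⟨hlast, hij⟩, hij, hJ, hj0]
        · have hij' : i ≠ j := by rw [← hJ]; exact hij
          rw [hb, if_neg (by tauto), hbv, hvBcast, Function.update_of_ne hij']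
  -- measurability
  have hmA : MeasurableSet (b' ⁻¹' {vA}) := hb'meas (measurableSet_singleton vA)
  have hmB : ∀ j : Fin t, MeasurableSet (b' ⁻¹' {vB j} ∩ J ⁻¹' {j}) := fun j =>
    (hb'meas (measurableSet_singleton (vB j))).inter (hJmeas (measurableSet_singleton j))
  -- disjointness
  have hdisj : Disjoint (b' ⁻¹' {vA}) (⋃ j ∈ s, (b' ⁻¹' {vB j} ∩ J ⁻¹' {j})) := by
    rw [Set.disjoint_left]
    rintro ω hA hB
    simp only [Set.mem_iUnion, Set.mem_inter_iff, Set.mem_preimage, Set.mem_singleton_iff] at hA hB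
    obtain ⟨j, _, hbv, _⟩ := hB
    have h1 : b' ω (Fin.last t) = 1 := by rw [hA, hvAlast]
    have h0 : b' ω (Fin.last t) = 0 := by rw [hbv, hvBlast]
    omega
  have hpair : (s : Set (Fin t)).PairwiseDisjoint
      (fun j => b' ⁻¹' {vB j} ∩ J ⁻¹' {j}) := by
    intro j₁ _ j₂ _ hne
    rw [Function.onFun, Set.disjoint_left]
    rintro ω ⟨_, hJ1⟩ ⟨_, hJ2⟩
    simp only [Set.mem_preimage, Set.mem_singleton_iff] at hJ1 hJ2
    exact hne (hJ1 ▸ hJ2 ▸ rfl)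
  -- properties of vA
  have hvA1 : ∀ i, vA i ≤ 1 := by
    intro i
    induction i using Fin.lastCases with
    | last => rw [hvAlast]
    | cast i => rw [hvAcast]; exact hw1 i
  have hvAsum : ∑ i, vA i = k := by
    rw [Fin.sum_univ_castSucc, hvAlast]
    have : ∑ i : Fin t, vA i.castSucc = ∑ i : Fin t, w i :=
      Finset.sum_congr rfl fun i _ => hvAcast i
    rw [this, hwsum]
    omega
  -- properties of vB j for j ∈ s
  have hvBprop : ∀ j ∈ s, (∀ i, vB j i ≤ 1) ∧ (∑ i, vB j i = k) := by
    intro j hj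
    rw [hs, Finset.mem_filter] at hj
    obtain ⟨-, hj0⟩ := hj
    constructor
    · intro i
      induction i using Fin.lastCases with
      | last => rw [hvBlast]; omega
      | cast i =>
        rw [hvBcast]
        by_cases hij : i = j
        · subst hij; rw [Function.update_self]
        · rw [Function.update_of_ne hij]; exact hw1 i
    · rw [Fin.sum_univ_castSucc, hvBlast, add_zero]
      have hrw : ∑ i : Fin t, vB j i.castSucc = ∑ i : Fin t, Function.update w j 1 i :=
        Finset.sum_congr rfl fun i _ => hvBcast j i
      rw [hrw]
      have e2 : w j + ∑ i ∈ Finset.univ.erase j, w i = ∑ i : Fin t, w i :=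
        Finset.add_sum_erase _ w (Finset.mem_univ _)
      have e3 : Function.update w j 1 j + ∑ i ∈ Finset.univ.erase j, Function.update w j 1 i
          = ∑ i : Fin t, Function.update w j 1 i :=
        Finset.add_sum_erase _ (Function.update w j 1) (Finset.mem_univ _)
      have e4 : ∑ i ∈ Finset.univ.erase j, Function.update w j 1 i
          = ∑ i ∈ Finset.univ.erase j, w i :=
        Finset.sum_congr rfl fun i hi =>
          Function.update_of_ne (Finset.ne_of_mem_erase hi) _ _
      rw [Function.update_self] at e3
      omega
  -- cardinality of s
  have hcard : s.card = t + 1 - k := by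
    have hsplit := Finset.card_filter_add_card_filter_not
      (s := (Finset.univ : Finset (Fin t))) (p := fun j => w j = 0)
    have hones : (Finset.univ.filter (fun j => ¬ w j = 0)).card = k - 1 := by
      have h0 : ∑ i ∈ Finset.univ.filter (fun j => w j = 0), w i = 0 :=
        Finset.sum_eq_zero fun i hi => (Finset.mem_filter.mp hi).2
      have hsum2 : ∑ i ∈ Finset.univ.filter (fun j => w j = 0), w i
          + ∑ i ∈ Finset.univ.filter (fun j => ¬ w j = 0), w i = ∑ i : Fin t, w i :=
        Finset.sum_filter_add_sum_filter_not Finset.univ (fun j => w j = 0) w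
      have h1 : ∑ i ∈ Finset.univ.filter (fun j => ¬ w j = 0), w i
          = (Finset.univ.filter (fun j => ¬ w j = 0)).card := by
        rw [Finset.card_eq_sum_ones]
        refine Finset.sum_congr rfl fun i hi => ?_
        have h2 := (Finset.mem_filter.mp hi).2
        have h3 := hw1 i
        omega
      omega
    rw [hones] at hsplit
    simp only [Finset.card_univ, Fintype.card_fin] at hsplit
    rw [hs]
    omega
  -- compute
  rw [hset, measure_union hdisj (MeasurableSet.biUnion s.countable_toSet (fun j _ => hmB j)),
    measure_biUnion_finset hpair (fun j _ => hmB j)]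
  have hA : volume (b' ⁻¹' {vA}) = (((t + 1).choose k : ℝ≥0∞))⁻¹ := hb'unif vA hvA1 hvAsum
  have hB : ∀ j ∈ s, volume (b' ⁻¹' {vB j} ∩ J ⁻¹' {j})
      = (((t + 1).choose k : ℝ≥0∞))⁻¹ / (k : ℝ≥0∞) := by
    intro j hj
    obtain ⟨h1, h2⟩ := hvBprop j hj
    have h4 : vB j j.castSucc = 1 := by rw [hvBcast, Function.update_self]
    exact hJunif (vB j) h1 h2 (hvBlast j) j h4
  rw [hA, Finset.sum_congr rfl hB, Finset.sum_const, hcard, nsmul_eq_mul]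
  exact arith15 t k hk1 hk2
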